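/- arXiv:2501.10644 — 3 statements merged into one kernel-verified Lean document; each statement's English description precedes it below -/
import Mathlib

section
/- Consider N UAVs with computation times T_n^{comp} ≥ 0, payload sizes d_n > 0, total bandwidth B > 0, and SNR constants c_n > 0, and define the completion time of UAV n under bandwidth fraction γ_n > 0 as T_n(γ_n) = T_n^{comp} + d_n·ln 2 / (B · f_{c_n}(γ_n)). Suppose there exists T > max_n T_n^{comp} with d_n·ln 2/(B(T − T_n^{comp})) < c_n for all n. Then there exists a unique T* > max_n T_n^{comp} such that Σ_{n=1}^N γ_n(T*) = 1, where γ_n(T) denotes the unique γ > 0 with f_{c_n}(γ) = d_n·ln 2/(B(T − T_n^{comp})); moreover the allocation γ_n* = γ_n(T*) is the unique minimizer of max_n T_n(γ_n) over all allocations γ ∈ (0,∞)^N with Σ_n γ_n ≤ 1, and the optimal value equals T*. -/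
open Real Set

noncomputable def fc (c γ : ℝ) : ℝ := γ * Real.log (1 + c / γ)

lemma log_gt_one_sub_inv {y : ℝ} (hy : 1 < y) : 1 - y⁻¹ < Real.log y := by
  have h0 : 0 < y⁻¹ := inv_pos.mpr (by linarith)
  have h1 : y⁻¹ ≠ 1 := by
    intro h; rw [inv_eq_one] at h; linarith
  have := Real.log_lt_sub_one_of_pos h0 h1
  rw [Real.log_inv] at this
  linarith

lemma one_lt_aux {c γ : ℝ} (hc : 0 < c) (hγ : 0 < γ) : 1 < 1 + c / γ := by
  have := div_pos hc hγ; linarith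

lemma fc_pos {c γ : ℝ} (hc : 0 < c) (hγ : 0 < γ) : 0 < fc c γ :=
  mul_pos hγ (Real.log_pos (one_lt_aux hc hγ))

lemma fc_lt {c γ : ℝ} (hc : 0 < c) (hγ : 0 < γ) : fc c γ < c := by
  have h1 := one_lt_aux hc hγ
  have := Real.log_lt_sub_one_of_pos (by linarith : (0:ℝ) < 1 + c / γ) (by linarith)
  have h3 : Real.log (1 + c / γ) < c / γ := by linarith
  have := (mul_lt_mul_iff_right₀ hγ).mpr h3
  rwa [mul_div_cancel₀ _ (ne_of_gt hγ)] at this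

lemma fc_gt {c γ : ℝ} (hc : 0 < c) (hγ : 0 < γ) : c * γ / (γ + c) < fc c γ := by
  have h1 := one_lt_aux hc hγ
  have h2 := log_gt_one_sub_inv h1
  have hγc : 0 < γ + c := by linarith
  have heq : 1 - (1 + c / γ)⁻¹ = c / (γ + c) := by
    rw [show 1 + c / γ = (γ + c) / γ by field_simp]
    field_simp
    ring
  rw [heq] at h2
  have := (mul_lt_mul_iff_right₀ hγ).mpr h2
  calc c * γ / (γ + c) = γ * (c / (γ + c)) := by ring
    _ < fc c γ := this

lemma fc_le_sqrt {c γ : ℝ} (hc : 0 < c) (hγ : 0 < γ) : fc c γ ≤ 2 * Real.sqrt (c * γ) := by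
  set u := c / γ with hu
  have hu0 : 0 < u := div_pos hc hγ
  have hlog : Real.log (1 + u) ≤ 2 * Real.sqrt u := by
    have h1 : Real.log (1 + u) = 2 * Real.log (Real.sqrt (1 + u)) := by
      rw [Real.log_sqrt (by linarith)]; ring
    have h2 : Real.log (Real.sqrt (1 + u)) ≤ Real.sqrt (1 + u) - 1 :=
      Real.log_le_sub_one_of_pos (Real.sqrt_pos.mpr (by linarith))
    have h3 : Real.sqrt (1 + u) ≤ 1 + Real.sqrt u := by
      have : (1 : ℝ) + u ≤ (1 + Real.sqrt u) ^ 2 := by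
        have hs : Real.sqrt u ^ 2 = u := Real.sq_sqrt hu0.le
        nlinarith [Real.sqrt_nonneg u]
      calc Real.sqrt (1 + u) ≤ Real.sqrt ((1 + Real.sqrt u) ^ 2) := Real.sqrt_le_sqrt this
        _ = 1 + Real.sqrt u := Real.sqrt_sq (by positivity)
    linarith
  have hkey : γ * Real.sqrt u = Real.sqrt (c * γ) := by
    rw [show c * γ = γ ^ 2 * u by rw [hu]; field_simp, Real.sqrt_mul (sq_nonneg γ),
      Real.sqrt_sq hγ.le]
  calc fc c γ ≤ γ * (2 * Real.sqrt u) := by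
        exact (mul_le_mul_iff_right₀ hγ).mpr hlog
    _ = 2 * (γ * Real.sqrt u) := by ring
    _ = 2 * Real.sqrt (c * γ) := by rw [hkey]

lemma fc_hasDerivAt {c : ℝ} (hc : 0 < c) {x : ℝ} (hx : 0 < x) :
    HasDerivAt (fun γ => γ * (Real.log (γ + c) - Real.log γ))
      (Real.log (x + c) - Real.log x - c / (x + c)) x := by
  have h1 : HasDerivAt (fun γ : ℝ => Real.log (γ + c)) ((x + c)⁻¹) x := by
    have := ((hasDerivAt_id x).add_const c).log (by intro h; simp at h; linarith)
    simpa using this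
  have h2 : HasDerivAt Real.log x⁻¹ x := Real.hasDerivAt_log (ne_of_gt hx)
  have h3 : HasDerivAt (fun γ => γ * (Real.log (γ + c) - Real.log γ))
      (1 * (Real.log (x + c) - Real.log x) + x * ((x + c)⁻¹ - x⁻¹)) x :=
    (hasDerivAt_id x).mul (h1.sub h2)
  convert h3 using 1
  have hxc : x + c ≠ 0 := by linarith
  have hx0 : x ≠ 0 := ne_of_gt hx
  field_simp
  ring

lemma fc_eq_on {c : ℝ} (hc : 0 < c) {γ : ℝ} (hγ : 0 < γ) :
    fc c γ = γ * (Real.log (γ + c) - Real.log γ) := by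
  rw [fc, show 1 + c / γ = (γ + c) / γ by field_simp,
    Real.log_div (by positivity) (ne_of_gt hγ)]

lemma fc_strictMonoOn {c : ℝ} (hc : 0 < c) : StrictMonoOn (fc c) (Ioi 0) := by
  have hg : StrictMonoOn (fun γ => γ * (Real.log (γ + c) - Real.log γ)) (Ioi 0) := by
    apply strictMonoOn_of_deriv_pos (convex_Ioi 0)
    · intro x hx
      exact ((fc_hasDerivAt hc hx).continuousAt).continuousWithinAt
    · intro x hx
      rw [interior_Ioi] at hx
      replace hx : 0 < x := hx
      rw [(fc_hasDerivAt hc hx).deriv]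
      have h1 : (1 : ℝ) < (x + c) / x := by
        rw [lt_div_iff₀ hx]; linarith
      have h2 := log_gt_one_sub_inv h1
      have hxc : x + c ≠ 0 := by linarith
      have h3 : Real.log ((x + c) / x) = Real.log (x + c) - Real.log x :=
        Real.log_div hxc (ne_of_gt hx)
      have h4 : 1 - ((x + c) / x)⁻¹ = c / (x + c) := by
        rw [inv_div]; field_simp; ring
      rw [h3, h4] at h2
      linarith
  intro x hx y hy hxy
  rw [fc_eq_on hc hx, fc_eq_on hc hy]
  exact hg hx hy hxy

lemma fc_continuousAt {c : ℝ} (hc : 0 < c) {x : ℝ} (hx : 0 < x) :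
    ContinuousAt (fc c) x := by
  have h := (fc_hasDerivAt hc hx).continuousAt
  have : ∀ᶠ y in nhds x, (fun γ => γ * (Real.log (γ + c) - Real.log γ)) y = fc c y := by
    filter_upwards [IsOpen.mem_nhds isOpen_Ioi hx] with y hy
    exact (fc_eq_on hc hy).symm
  exact h.congr this

lemma fc_surj {c y : ℝ} (hc : 0 < c) (hy0 : 0 < y) (hyc : y < c) :
    ∃ γ, 0 < γ ∧ fc c γ = y := by
  set γ1 := y ^ 2 / (8 * c) with hγ1
  have hγ1pos : 0 < γ1 := by positivity
  set γ2 := γ1 + y * c / (c - y) + 1 with hγ2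
  have hcy : 0 < c - y := by linarith
  have hγ2pos : 0 < γ2 := by positivity
  have h12 : γ1 ≤ γ2 := by
    have : 0 ≤ y * c / (c - y) := by positivity
    simp only [hγ2]; linarith
  have hfγ1 : fc c γ1 ≤ y := by
    have h1 := fc_le_sqrt hc hγ1pos
    have h2 : c * γ1 = y ^ 2 / 8 := by rw [hγ1]; field_simp
    have h3 : Real.sqrt (c * γ1) ≤ y / 2 := by
      rw [h2]
      calc Real.sqrt (y ^ 2 / 8) ≤ Real.sqrt ((y / 2) ^ 2) := by
            apply Real.sqrt_le_sqrt; nlinarith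
        _ = y / 2 := Real.sqrt_sq (by positivity)
    linarith
  have hfγ2 : y ≤ fc c γ2 := by
    have h1 := fc_gt hc hγ2pos
    have h2 : y ≤ c * γ2 / (γ2 + c) := by
      rw [le_div_iff₀ (by linarith : (0:ℝ) < γ2 + c)]
      have hkey : γ2 * (c - y) ≥ y * c := by
        have h5 : y * c / (c - y) * (c - y) = y * c := by field_simp
        rw [hγ2]
        nlinarith [h5, mul_pos hγ1pos hcy, hcy]
      nlinarith
    linarith
  have hcont : ContinuousOn (fc c) (Icc γ1 γ2) := fun x hx =>
    (fc_continuousAt hc (lt_of_lt_of_le hγ1pos hx.1)).continuousWithinAt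
  have := intermediate_value_Icc h12 hcont
  obtain ⟨γ, hγmem, hγeq⟩ := this ⟨hfγ1, hfγ2⟩
  exact ⟨γ, lt_of_lt_of_le hγ1pos hγmem.1, hγeq⟩


/-- Theorem 2 of the paper.  Consider `N` UAVs with computation times `T_n^comp ≥ 0`,
payloads `d_n > 0`, total bandwidth `B > 0` and SNR constants `c_n > 0`, and completion
times `T_n(γ) = T_n^comp + d_n·ln 2/(B·f_{c_n}(γ))` with `f_c(γ) = γ ln(1 + c/γ)`.
Suppose some `T > max_n T_n^comp` satisfies `d_n·ln 2/(B(T − T_n^comp)) < c_n` for all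
`n`, and let `γfun n T` be the unique `γ > 0` with
`f_{c_n}(γ) = d_n·ln 2/(B(T − T_n^comp))` (whenever this equation is solvable).
Then there is a unique such `T*` with `Σ_n γfun n T* = 1`; moreover the allocation
`γ*_n = γfun n T*` is the unique minimizer of `max_n T_n(γ_n)` over all `γ ∈ (0,∞)^N`
with `Σ_n γ_n ≤ 1`, and the optimal value equals `T*`. -/
theorem optimal_bandwidth_allocation (N : ℕ) (hN : 0 < N)
    (Tcomp d c : Fin N → ℝ) (B : ℝ)
    (hTcomp : ∀ n, 0 ≤ Tcomp n) (hd : ∀ n, 0 < d n) (hc : ∀ n, 0 < c n) (hB : 0 < B)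
    (Ttime : Fin N → ℝ → ℝ)
    (hTtime : ∀ n γ, Ttime n γ =
      Tcomp n + d n * Real.log 2 / (B * (γ * Real.log (1 + c n / γ))))
    (hfeas : ∃ T : ℝ, (∀ n, Tcomp n < T) ∧
      ∀ n, d n * Real.log 2 / (B * (T - Tcomp n)) < c n)
    (γfun : Fin N → ℝ → ℝ)
    (hγfun : ∀ n, ∀ T : ℝ, Tcomp n < T →
      d n * Real.log 2 / (B * (T - Tcomp n)) < c n →
      (0 < γfun n T ∧
        γfun n T * Real.log (1 + c n / γfun n T) =
          d n * Real.log 2 / (B * (T - Tcomp n))) ∧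
      ∀ γ : ℝ, 0 < γ →
        γ * Real.log (1 + c n / γ) = d n * Real.log 2 / (B * (T - Tcomp n)) →
        γ = γfun n T) :
    ∃ Tstar : ℝ,
      -- T* > max_n T_n^comp, and each equation f_{c_n}(γ) = a_n(T*) is solvable
      ((∀ n, Tcomp n < Tstar) ∧
        ∀ n, d n * Real.log 2 / (B * (Tstar - Tcomp n)) < c n) ∧
      -- Σ_n γ_n(T*) = 1
      (∑ n, γfun n Tstar = 1) ∧
      -- uniqueness of T*
      (∀ T : ℝ, (∀ n, Tcomp n < T) →
        (∀ n, d n * Real.log 2 / (B * (T - Tcomp n)) < c n) →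
        ∑ n, γfun n T = 1 → T = Tstar) ∧
      -- the optimal value of the allocation γ* equals T*
      ((⨆ n, Ttime n (γfun n Tstar)) = Tstar) ∧
      -- γ* is the unique minimizer of the round time over feasible allocations
      (∀ γ : Fin N → ℝ, (∀ n, 0 < γ n) → ∑ n, γ n ≤ 1 →
        Tstar ≤ (⨆ n, Ttime n (γ n)) ∧
        ((⨆ n, Ttime n (γ n)) = Tstar → γ = fun n => γfun n Tstar)) := by
  classical
  haveI : Nonempty (Fin N) := ⟨⟨0, hN⟩⟩
  have hlog2 : 0 < Real.log 2 := Real.log_pos (by norm_num)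
  set Ln : Fin N → ℝ := fun n => Tcomp n + d n * Real.log 2 / (B * c n) with hLn
  have hLn_gt : ∀ n, Tcomp n < Ln n := by
    intro n
    have h1 : 0 < d n * Real.log 2 / (B * c n) :=
      div_pos (mul_pos (hd n) hlog2) (mul_pos hB (hc n))
    simp only [hLn]; linarith
  have key : ∀ n (T : ℝ), Ln n < T ↔
      (Tcomp n < T ∧ d n * Real.log 2 / (B * (T - Tcomp n)) < c n) := by
    intro n T
    have hbc : 0 < B * c n := mul_pos hB (hc n)
    constructor
    · intro h
      have h1 : Tcomp n < T := lt_trans (hLn_gt n) h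
      refine ⟨h1, ?_⟩
      have hden : 0 < B * (T - Tcomp n) := mul_pos hB (by linarith)
      rw [div_lt_iff₀ hden]
      have h2 : d n * Real.log 2 / (B * c n) < T - Tcomp n := by
        simp only [hLn] at h; linarith
      rw [div_lt_iff₀ hbc] at h2
      nlinarith
    · rintro ⟨h1, h2⟩
      have hden : 0 < B * (T - Tcomp n) := mul_pos hB (by linarith)
      rw [div_lt_iff₀ hden] at h2
      have h3 : d n * Real.log 2 / (B * c n) < T - Tcomp n := by
        rw [div_lt_iff₀ hbc]; nlinarith
      simp only [hLn]; linarith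
  have hsol : ∀ n (T : ℝ), Ln n < T →
      0 < γfun n T ∧ fc (c n) (γfun n T) = d n * Real.log 2 / (B * (T - Tcomp n)) := by
    intro n T h
    obtain ⟨h1, h2⟩ := (key n T).mp h
    exact (hγfun n T h1 h2).1
  have huniq : ∀ n (T : ℝ), Ln n < T → ∀ γ : ℝ, 0 < γ →
      fc (c n) γ = d n * Real.log 2 / (B * (T - Tcomp n)) → γ = γfun n T := by
    intro n T h γ hγ heq
    obtain ⟨h1, h2⟩ := (key n T).mp h
    exact (hγfun n T h1 h2).2 γ hγ heq
  have hanti : ∀ n (T1 : ℝ), Ln n < T1 → ∀ T2 : ℝ, Ln n < T2 → T1 < T2 →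
      γfun n T2 < γfun n T1 := by
    intro n T1 h1 T2 h2 h12
    obtain ⟨hp1, he1⟩ := hsol n T1 h1
    obtain ⟨hp2, he2⟩ := hsol n T2 h2
    have hc1 : Tcomp n < T1 := lt_trans (hLn_gt n) h1
    have ha : d n * Real.log 2 / (B * (T2 - Tcomp n)) <
        d n * Real.log 2 / (B * (T1 - Tcomp n)) := by
      rw [div_lt_div_iff_of_pos_left (mul_pos (hd n) hlog2) (mul_pos hB (by linarith))
        (mul_pos hB (by linarith))]
      have := hB
      nlinarith
    by_contra hcon
    push_neg at hcon
    rcases eq_or_lt_of_le hcon with he|hl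
    · rw [he] at he1; rw [he1] at he2; linarith
    · have := fc_strictMonoOn (hc n) (mem_Ioi.mpr hp1) (mem_Ioi.mpr hp2) hl
      rw [he1, he2] at this; linarith
  have hsurj : ∀ n (γ0 : ℝ), 0 < γ0 → ∃ T, Ln n < T ∧ γfun n T = γ0 := by
    intro n γ0 hγ0
    have hb0 : 0 < fc (c n) γ0 := fc_pos (hc n) hγ0
    have hbc : fc (c n) γ0 < c n := fc_lt (hc n) hγ0
    set b := fc (c n) γ0 with hbdef
    refine ⟨Tcomp n + d n * Real.log 2 / (B * b), ?_, ?_⟩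
    · have h1 : d n * Real.log 2 / (B * c n) < d n * Real.log 2 / (B * b) := by
        rw [div_lt_div_iff_of_pos_left (mul_pos (hd n) hlog2) (mul_pos hB (hc n)) (mul_pos hB hb0)]
        nlinarith
      simp only [hLn]; linarith
    · have hT : Ln n < Tcomp n + d n * Real.log 2 / (B * b) := by
        have h1 : d n * Real.log 2 / (B * c n) < d n * Real.log 2 / (B * b) := by
          rw [div_lt_div_iff_of_pos_left (mul_pos (hd n) hlog2) (mul_pos hB (hc n)) (mul_pos hB hb0)]
          nlinarith
        simp only [hLn]; linarith
      refine (huniq n _ hT γ0 hγ0 ?_).symm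
      rw [show Tcomp n + d n * Real.log 2 / (B * b) - Tcomp n
          = d n * Real.log 2 / (B * b) by ring]
      rw [← hbdef]
      have hd' : d n ≠ 0 := (hd n).ne'
      have hl2 : Real.log 2 ≠ 0 := hlog2.ne'
      have hb' : b ≠ 0 := hb0.ne'
      have hB' : B ≠ 0 := hB.ne'
      field_simp
  have hcontAt : ∀ n (T0 : ℝ), Ln n < T0 → ContinuousAt (γfun n) T0 := by
    intro n T0 hT0
    rw [ContinuousAt, tendsto_order]
    constructor
    · intro a ha
      rcases le_or_gt a 0 with h|h
      · filter_upwards [IsOpen.mem_nhds isOpen_Ioi hT0] with T hT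
        exact lt_of_le_of_lt h (hsol n T hT).1
      · obtain ⟨T2, hT2, hT2eq⟩ := hsurj n ((a + γfun n T0) / 2) (by linarith)
        have hmid2 : (a + γfun n T0) / 2 < γfun n T0 := by linarith
        have hT0T2 : T0 < T2 := by
          by_contra hcon
          push_neg at hcon
          rcases eq_or_lt_of_le hcon with he|hl
          · rw [he] at hT2eq; linarith
          · have := hanti n T2 hT2 T0 hT0 hl
            rw [hT2eq] at this; linarith
        filter_upwards [IsOpen.mem_nhds isOpen_Ioo ⟨hT0, hT0T2⟩] with T hT
        have := hanti n T hT.1 T2 hT2 hT.2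
        rw [hT2eq] at this; linarith
    · intro b hb
      have hps := (hsol n T0 hT0).1
      obtain ⟨T1, hT1, hT1eq⟩ := hsurj n ((γfun n T0 + b) / 2) (by linarith)
      have hmid1 : γfun n T0 < (γfun n T0 + b) / 2 := by linarith
      have hT1T0 : T1 < T0 := by
        by_contra hcon
        push_neg at hcon
        rcases eq_or_lt_of_le hcon with he|hl
        · rw [← he] at hT1eq; linarith
        · have := hanti n T0 hT0 T1 hT1 hl
          rw [hT1eq] at this; linarith
      filter_upwards [IsOpen.mem_nhds isOpen_Ioi hT1T0] with T hT
      have := hanti n T1 hT1 T (lt_trans hT1 hT) hT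
      rw [hT1eq] at this; linarith
  have hne : (Finset.univ : Finset (Fin N)).Nonempty := Finset.univ_nonempty
  set L := Finset.univ.sup' hne Ln with hLdef
  have hLmem : ∀ n, Ln n ≤ L := fun n => Finset.le_sup' Ln (Finset.mem_univ n)
  have hLlt : ∀ T : ℝ, L < T ↔ ∀ n, Ln n < T := by
    intro T
    rw [hLdef, Finset.sup'_lt_iff]
    simp
  have hS_anti : ∀ T1 : ℝ, L < T1 → ∀ T2 : ℝ, L < T2 → T1 < T2 →
      (∑ n, γfun n T2) < ∑ n, γfun n T1 := by
    intro T1 h1 T2 h2 h12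
    apply Finset.sum_lt_sum_of_nonempty hne
    intro n _
    exact hanti n T1 (lt_of_le_of_lt (hLmem n) h1) T2 (lt_of_le_of_lt (hLmem n) h2) h12
  have hNpos : (0:ℝ) < N := by exact_mod_cast hN
  choose g hg1 hg2 using fun n => hsurj n (1 / (2 * (N:ℝ)))
    (by rw [one_div]; exact inv_pos.mpr (by linarith))
  set Tbig := (Finset.univ.sup' hne g) + 1 with hTbigdef
  have hgTbig : ∀ n, g n < Tbig :=
    fun n => lt_of_le_of_lt (Finset.le_sup' g (Finset.mem_univ n)) (lt_add_one _)
  have hTbigL : L < Tbig := (hLlt Tbig).mpr fun n => lt_trans (hg1 n) (hgTbig n)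
  have hSbig : (∑ n, γfun n Tbig) < 1 := by
    have hterm : ∀ n, γfun n Tbig < 1 / (2 * (N:ℝ)) := by
      intro n
      have := hanti n (g n) (hg1 n) Tbig (lt_trans (hg1 n) (hgTbig n)) (hgTbig n)
      rwa [hg2 n] at this
    calc (∑ n, γfun n Tbig) < ∑ _n : Fin N, 1 / (2 * (N:ℝ)) :=
          Finset.sum_lt_sum_of_nonempty hne fun n _ => hterm n
      _ = 1 / 2 := by
          rw [Finset.sum_const, Finset.card_univ, Fintype.card_fin, nsmul_eq_mul]
          field_simp
      _ < 1 := by norm_num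
  obtain ⟨n0, -, hn0⟩ := Finset.exists_mem_eq_sup' hne Ln
  obtain ⟨T0, hT0Ln, hT0eq⟩ := hsurj n0 2 (by norm_num)
  have hT0L : L < T0 := by rw [hLdef, hn0]; exact hT0Ln
  have hST0 : 2 ≤ ∑ n, γfun n T0 := by
    have h1 : γfun n0 T0 ≤ ∑ n, γfun n T0 := Finset.single_le_sum (f := fun n => γfun n T0)
      (fun n _ => ((hsol n T0 (lt_of_le_of_lt (hLmem n) hT0L)).1).le) (Finset.mem_univ n0)
    linarith [hT0eq]
  have hT0Tbig : T0 < Tbig := by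
    by_contra hcon
    push_neg at hcon
    rcases eq_or_lt_of_le hcon with he|hl
    · rw [he] at hSbig; linarith
    · have := hS_anti Tbig hTbigL T0 hT0L hl; linarith
  have hScont : ContinuousOn (fun T => ∑ n, γfun n T) (Icc T0 Tbig) := by
    intro T hT
    have hTL : L < T := lt_of_lt_of_le hT0L hT.1
    have hca : ContinuousAt (fun T => ∑ n, γfun n T) T := tendsto_finset_sum _ fun n _ =>
      hcontAt n T (lt_of_le_of_lt (hLmem n) hTL)
    exact hca.continuousWithinAt
  obtain ⟨Tstar, hTstarmem, hTstareq⟩ :=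
    intermediate_value_Icc' (le_of_lt hT0Tbig) hScont ⟨hSbig.le, by linarith⟩
  have hTstar1 : ∑ n, γfun n Tstar = 1 := hTstareq
  have hTstarL : L < Tstar := lt_of_lt_of_le hT0L hTstarmem.1
  have hTstarLn : ∀ n, Ln n < Tstar := fun n => lt_of_le_of_lt (hLmem n) hTstarL
  have hprop : ∀ n, Tcomp n < Tstar ∧
      d n * Real.log 2 / (B * (Tstar - Tcomp n)) < c n :=
    fun n => (key n Tstar).mp (hTstarLn n)
  have hval : ∀ n, Ttime n (γfun n Tstar) = Tstar := by
    intro n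
    obtain ⟨hp, he⟩ := hsol n Tstar (hTstarLn n)
    have h1 : Tcomp n < Tstar := (hprop n).1
    rw [hTtime, show γfun n Tstar * Real.log (1 + c n / γfun n Tstar)
      = fc (c n) (γfun n Tstar) from rfl, he]
    have hd' : d n ≠ 0 := (hd n).ne'
    have hl2 : Real.log 2 ≠ 0 := hlog2.ne'
    have hB' : B ≠ 0 := hB.ne'
    have hts : Tstar - Tcomp n ≠ 0 := by intro hcontra; linarith [sub_eq_zero.mp hcontra]
    field_simp
    ring
  have hcmp : ∀ n (γ : ℝ), 0 < γ →
      (Ttime n γ < Tstar → γfun n Tstar < γ) ∧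
      (Ttime n γ ≤ Tstar → γfun n Tstar ≤ γ) := by
    intro n γ hγ
    have hγs : 0 < γfun n Tstar := (hsol n Tstar (hTstarLn n)).1
    have hfγ : 0 < fc (c n) γ := fc_pos (hc n) hγ
    have hfγs : 0 < fc (c n) (γfun n Tstar) := fc_pos (hc n) hγs
    have e1 : Ttime n γ = Tcomp n + d n * Real.log 2 / (B * fc (c n) γ) := hTtime n γ
    have e2 : Tstar = Tcomp n + d n * Real.log 2 / (B * fc (c n) (γfun n Tstar)) :=
      (hval n).symm.trans (hTtime n (γfun n Tstar))
    have hmono : fc (c n) (γfun n Tstar) ≤ fc (c n) γ → γfun n Tstar ≤ γ := by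
      intro hff
      by_contra hcon
      push_neg at hcon
      have := fc_strictMonoOn (hc n) (mem_Ioi.mpr hγ) (mem_Ioi.mpr hγs) hcon
      linarith
    constructor
    · intro h
      rw [e1] at h
      rw [e2] at h
      have h' : d n * Real.log 2 / (B * fc (c n) γ) <
          d n * Real.log 2 / (B * fc (c n) (γfun n Tstar)) := by linarith
      rw [div_lt_div_iff_of_pos_left (mul_pos (hd n) hlog2) (mul_pos hB hfγ) (mul_pos hB hfγs)] at h'
      have hff : fc (c n) (γfun n Tstar) < fc (c n) γ := by
        have := (mul_lt_mul_iff_right₀ hB).mp h'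
        linarith
      rcases eq_or_lt_of_le (hmono hff.le) with he|hl
      · rw [← he] at hff; linarith
      · exact hl
    · intro h
      rw [e1] at h
      rw [e2] at h
      have h' : d n * Real.log 2 / (B * fc (c n) γ) ≤
          d n * Real.log 2 / (B * fc (c n) (γfun n Tstar)) := by linarith
      rw [div_le_div_iff_of_pos_left (mul_pos (hd n) hlog2) (mul_pos hB hfγ) (mul_pos hB hfγs)] at h'
      have hff : fc (c n) (γfun n Tstar) ≤ fc (c n) γ := by
        have := (mul_le_mul_iff_right₀ hB).mp h'
        linarith
      exact hmono hff
  refine ⟨Tstar, ⟨fun n => (hprop n).1, fun n => (hprop n).2⟩, hTstar1, ?_, ?_, ?_⟩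
  · intro T h1 h2 hsum
    have hTL : L < T := (hLlt T).mpr fun n => (key n T).mpr ⟨h1 n, h2 n⟩
    rcases lt_trichotomy T Tstar with h|h|h
    · have := hS_anti T hTL Tstar hTstarL h
      linarith
    · exact h
    · have := hS_anti Tstar hTstarL T hTL h
      linarith
  · calc (⨆ n, Ttime n (γfun n Tstar)) = ⨆ _n : Fin N, Tstar := by simp only [hval]
      _ = Tstar := ciSup_const
  · intro γ hγpos hγsum
    have hbdd : BddAbove (Set.range fun n => Ttime n (γ n)) := (Set.finite_range _).bddAbove
    have hle : ∀ n, Ttime n (γ n) ≤ ⨆ n, Ttime n (γ n) := fun n => le_ciSup hbdd n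
    constructor
    · by_contra hcon
      push_neg at hcon
      have hlt : ∀ n, γfun n Tstar < γ n := fun n =>
        (hcmp n (γ n) (hγpos n)).1 (lt_of_le_of_lt (hle n) hcon)
      have := Finset.sum_lt_sum_of_nonempty hne fun n _ => hlt n
      linarith
    · intro heq
      have hge : ∀ n, γfun n Tstar ≤ γ n := fun n =>
        (hcmp n (γ n) (hγpos n)).2 ((hle n).trans (le_of_eq heq))
      have hsle : ∑ n, γfun n Tstar ≤ ∑ n, γ n := Finset.sum_le_sum fun n _ => hge n
      have hseq : ∑ n, γfun n Tstar = ∑ n, γ n :=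
        le_antisymm hsle (by rw [hTstar1]; exact hγsum)
      have hall := (Finset.sum_eq_sum_iff_of_le fun n _ => hge n).mp hseq
      funext n
      exact (hall n (Finset.mem_univ n)).symm
end

section
/- Consider N UAVs with computation times T_n^{comp} ≥ 0, payload sizes d_n > 0, bandwidth B > 0 and SNR constants c_n > 0, with completion times T_n(γ_n) = T_n^{comp} + d_n·ln 2/(B·f_{c_n}(γ_n)) for γ_n > 0. If γ* ∈ (0,∞)^N minimizes the round time max_{1≤n≤N} T_n(γ_n) subject to Σ_{n=1}^N γ_n ≤ 1, then the full bandwidth is used, Σ_{n=1}^N γ*_n = 1, and all completion times are equal: T_1(γ*_1) = T_2(γ*_2) = ⋯ = T_N(γ*_N). -/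
open Real

private lemma log_lb_aux {c γ : ℝ} (hc : 0 < c) (hγ : 0 < γ) :
    c / (γ + c) < Real.log (1 + c / γ) := by
  have h1 : (0:ℝ) < γ + c := by linarith
  have hx : (0:ℝ) < γ / (γ + c) := div_pos hγ h1
  have hne : γ / (γ + c) ≠ 1 := by
    intro h
    have := (div_eq_one_iff_eq h1.ne').mp h
    linarith
  have hkey := Real.log_lt_sub_one_of_pos hx hne
  have hlog : Real.log (γ / (γ + c)) = - Real.log ((γ + c) / γ) := by
    rw [Real.log_div hγ.ne' h1.ne', Real.log_div h1.ne' hγ.ne']; ring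
  have harg : 1 + c / γ = (γ + c) / γ := by field_simp
  have h2 : γ / (γ + c) - 1 = - (c / (γ + c)) := by field_simp; ring
  rw [harg]
  rw [hlog, h2] at hkey
  linarith

private lemma hasDerivAt_aux {c : ℝ} (hc : 0 < c) {x : ℝ} (hx : 0 < x) :
    HasDerivAt (fun y => y * (Real.log (y + c) - Real.log y))
      (1 * (Real.log (x + c) - Real.log x) + x * ((x+c)⁻¹ - x⁻¹)) x := by
  have h1 : HasDerivAt (fun y : ℝ => y + c) 1 x := (hasDerivAt_id x).add_const c
  have h2 : HasDerivAt (fun y => Real.log (y + c)) ((x+c)⁻¹) x := by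
    have := (Real.hasDerivAt_log (by positivity : x + c ≠ 0)).comp x h1
    simpa [Function.comp_def] using this
  have h3 : HasDerivAt Real.log (x⁻¹) x := Real.hasDerivAt_log hx.ne'
  exact (hasDerivAt_id x).mul (h2.sub h3)

private lemma log_shift {c y : ℝ} (hc : 0 < c) (hy : 0 < y) :
    Real.log (y + c) - Real.log y = Real.log (1 + c / y) := by
  rw [← Real.log_div (by positivity) hy.ne']
  congr 1; field_simp

private lemma f_strictMono {c : ℝ} (hc : 0 < c) {a b : ℝ} (ha : 0 < a) (hab : a < b) :
    a * Real.log (1 + c / a) < b * Real.log (1 + c / b) := by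
  have key : StrictMonoOn (fun y => y * (Real.log (y + c) - Real.log y)) (Set.Ioi 0) := by
    apply strictMonoOn_of_deriv_pos (convex_Ioi 0)
    · intro x hx
      exact (hasDerivAt_aux hc hx).differentiableAt.continuousAt.continuousWithinAt
    · intro x hx
      rw [interior_Ioi] at hx
      rw [(hasDerivAt_aux hc hx).deriv]
      have hlb := log_lb_aux hc hx
      have e1 : Real.log (x + c) - Real.log x = Real.log (1 + c / x) := log_shift hc hx
      have e2 : x * ((x+c)⁻¹ - x⁻¹) = - (c / (x + c)) := by
        have hx' : (0:ℝ) < x := hx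
        have h1 : x ≠ 0 := hx'.ne'
        have h2 : x + c ≠ 0 := by positivity
        field_simp
        ring
      rw [e1, e2]
      linarith
  have hb : 0 < b := ha.trans hab
  have := key (Set.mem_Ioi.mpr ha) (Set.mem_Ioi.mpr hb) hab
  simpa [log_shift hc ha, log_shift hc hb] using this

private lemma f_pos {c γ : ℝ} (hc : 0 < c) (hγ : 0 < γ) :
    0 < γ * Real.log (1 + c / γ) :=
  mul_pos hγ (Real.log_pos (by have := div_pos hc hγ; linarith))

private lemma T_anti {Tc dl B c : ℝ} (hdl : 0 < dl) (hB : 0 < B) (hc : 0 < c)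
    {a b : ℝ} (ha : 0 < a) (hab : a < b) :
    Tc + dl / (B * (b * Real.log (1 + c / b))) <
      Tc + dl / (B * (a * Real.log (1 + c / a))) := by
  have hfa : 0 < a * Real.log (1 + c / a) := f_pos hc ha
  have h1 : 0 < B * (a * Real.log (1 + c / a)) := mul_pos hB hfa
  have h2 : B * (a * Real.log (1 + c / a)) < B * (b * Real.log (1 + c / b)) :=
    (mul_lt_mul_iff_right₀ hB).mpr (f_strictMono hc ha hab)
  have := div_lt_div_of_pos_left hdl h1 h2
  linarith

private lemma T_contAt {Tc dl B c : ℝ} (hB : 0 < B) (hc : 0 < c)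
    {x0 : ℝ} (hx0 : 0 < x0) :
    ContinuousAt (fun γ => Tc + dl / (B * (γ * Real.log (1 + c / γ)))) x0 := by
  have h1 : ContinuousAt (fun γ : ℝ => 1 + c / γ) x0 :=
    continuousAt_const.add (continuousAt_const.div continuousAt_id hx0.ne')
  have hne : (1 : ℝ) + c / x0 ≠ 0 := by
    have := div_pos hc hx0; positivity
  have h2 : ContinuousAt (fun γ : ℝ => Real.log (1 + c / γ)) x0 := h1.log hne
  have h3 : ContinuousAt (fun γ : ℝ => γ * Real.log (1 + c / γ)) x0 :=
    continuousAt_id.mul h2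
  have h4 : ContinuousAt (fun γ : ℝ => B * (γ * Real.log (1 + c / γ))) x0 :=
    continuousAt_const.mul h3
  have hden : B * (x0 * Real.log (1 + c / x0)) ≠ 0 := (mul_pos hB (f_pos hc hx0)).ne'
  exact continuousAt_const.add (continuousAt_const.div h4 hden)

/-- If an allocation `γ* ∈ (0,∞)^N` with `Σ_n γ*_n ≤ 1` minimizes the round time
`max_n T_n(γ_n)`, where `T_n(γ) = T_n^comp + d_n·ln 2/(B·f_{c_n}(γ))`, then the full
bandwidth is used (`Σ_n γ*_n = 1`) and all completion times are equal. -/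
theorem optimal_allocation_full_bandwidth_equal_times (N : ℕ) (hN : 0 < N)
    (Tcomp d c : Fin N → ℝ) (B : ℝ)
    (hTcomp : ∀ n, 0 ≤ Tcomp n) (hd : ∀ n, 0 < d n) (hc : ∀ n, 0 < c n) (hB : 0 < B)
    (Ttime : Fin N → ℝ → ℝ)
    (hTtime : ∀ n γ, Ttime n γ =
      Tcomp n + d n * Real.log 2 / (B * (γ * Real.log (1 + c n / γ))))
    (γstar : Fin N → ℝ) (hpos : ∀ n, 0 < γstar n) (hsum : ∑ n, γstar n ≤ 1)
    (hmin : ∀ γ : Fin N → ℝ, (∀ n, 0 < γ n) → ∑ n, γ n ≤ 1 →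
      (⨆ n, Ttime n (γstar n)) ≤ ⨆ n, Ttime n (γ n)) :
    (∑ n, γstar n = 1) ∧ ∀ n m : Fin N, Ttime n (γstar n) = Ttime m (γstar m) := by
  haveI : Nonempty (Fin N) := ⟨⟨0, hN⟩⟩
  have hdl : ∀ n, 0 < d n * Real.log 2 := fun n =>
    mul_pos (hd n) (Real.log_pos (by norm_num))
  -- strict antitonicity of each Ttime n on positives
  have hanti : ∀ (n : Fin N) {a b : ℝ}, 0 < a → a < b → Ttime n b < Ttime n a := by
    intro n a b ha hab
    rw [hTtime n a, hTtime n b]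
    exact T_anti (hdl n) hB (hc n) ha hab
  set M := ⨆ n, Ttime n (γstar n) with hM
  have hbdd : ∀ (γ : Fin N → ℝ), BddAbove (Set.range fun n => Ttime n (γ n)) :=
    fun γ => Set.Finite.bddAbove (Set.finite_range _)
  have hleM : ∀ n, Ttime n (γstar n) ≤ M := fun n => le_ciSup (hbdd γstar) n
  -- generic contradiction tool: a feasible γ with all values < M contradicts hmin
  have htool : ∀ (γ : Fin N → ℝ), (∀ n, 0 < γ n) → ∑ n, γ n ≤ 1 →
      (∀ n, Ttime n (γ n) < M) → False := by
    intro γ hγpos hγsum hlt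
    obtain ⟨n1, hn1⟩ := Finite.exists_max (fun n => Ttime n (γ n))
    have h1 : (⨆ n, Ttime n (γ n)) ≤ Ttime n1 (γ n1) := ciSup_le hn1
    have := hmin γ hγpos hγsum
    have := hlt n1
    linarith
  -- Part 1: sum = 1
  have hsum1 : ∑ n, γstar n = 1 := by
    by_contra hne
    have hlt : ∑ n, γstar n < 1 := lt_of_le_of_ne hsum hne
    set ε := (1 - ∑ n, γstar n) / N with hε
    have hεpos : 0 < ε := by
      apply div_pos (by linarith)
      exact_mod_cast hN
    refine htool (fun n => γstar n + ε)
      (fun n => by show 0 < γstar n + ε; linarith [hpos n]) ?_ ?_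
    · show ∑ n, (γstar n + ε) ≤ 1
      have heq : ∑ n, (γstar n + ε) = (∑ n, γstar n) + N * ε := by
        rw [Finset.sum_add_distrib, Finset.sum_const, Finset.card_univ, Fintype.card_fin,
          nsmul_eq_mul]
      have hN' : (N : ℝ) ≠ 0 := by exact_mod_cast hN.ne'
      have : (N : ℝ) * ε = 1 - ∑ n, γstar n := by rw [hε]; field_simp
      rw [heq, this]; linarith
    · intro n
      show Ttime n (γstar n + ε) < M
      exact lt_of_lt_of_le (hanti n (hpos n) (by linarith)) (hleM n)
  -- Part 2: all times equal
  have hall : ∀ n, Ttime n (γstar n) = M := by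
    by_contra hne
    push_neg at hne
    obtain ⟨k, hk⟩ := hne
    have hkM : Ttime k (γstar k) < M := lt_of_le_of_ne (hleM k) hk
    -- continuity of Ttime k at γstar k
    have hcont : ContinuousAt (Ttime k) (γstar k) := by
      have : Ttime k = fun γ => Tcomp k + d k * Real.log 2 /
          (B * (γ * Real.log (1 + c k / γ))) := funext (hTtime k)
      rw [this]
      exact T_contAt hB (hc k) (hpos k)
    have hev : ∀ᶠ x in nhds (γstar k), Ttime k x < M ∧ 0 < x :=
      (hcont.eventually_lt continuousAt_const hkM).and (eventually_gt_nhds (hpos k))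
    obtain ⟨ε, hεpos, hεball⟩ := Metric.eventually_nhds_iff.mp hev
    set δ := ε / 2 with hδ
    have hδpos : 0 < δ := by rw [hδ]; linarith
    have hδball : Ttime k (γstar k - δ) < M ∧ 0 < γstar k - δ := by
      apply hεball
      rw [Real.dist_eq]
      rw [abs_of_nonpos (by linarith)]
      linarith
    set γ' : Fin N → ℝ := fun n => if n = k then γstar k - δ else γstar n + δ / N with hγ'
    have hN' : (0:ℝ) < N := by exact_mod_cast hN
    refine htool γ' ?_ ?_ ?_
    · intro n
      by_cases h : n = k
      · simp only [hγ', h, if_pos rfl]; exact hδball.2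
      · simp only [hγ', if_neg h]
        have hδN : 0 < δ / N := by positivity
        linarith [hpos n]
    · have hδN : 0 < δ / N := by positivity
      have hγ'eq : ∀ n, γ' n = γstar n + ((if n = k then -δ - δ / N else 0) + δ / N) := by
        intro n
        by_cases h : n = k
        · subst h
          simp only [hγ', eq_self_iff_true, if_true, ite_true]
          ring
        · simp only [hγ', if_neg h]; ring
      have hcalc : ∑ n, γ' n = (∑ n, γstar n) + ((-δ - δ / N) + N * (δ / N)) := by
        rw [Finset.sum_congr rfl (fun n _ => hγ'eq n), Finset.sum_add_distrib,
          Finset.sum_add_distrib, Finset.sum_ite_eq' Finset.univ k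
            (fun _ => -δ - δ / N), if_pos (Finset.mem_univ k),
          Finset.sum_const, Finset.card_univ, Fintype.card_fin, nsmul_eq_mul]
      have hNδ : (N : ℝ) * (δ / N) = δ := by field_simp
      rw [hcalc, hNδ, hsum1]
      linarith
    · intro n
      by_cases h : n = k
      · subst h
        simp only [hγ', if_pos rfl]
        exact hδball.1
      · simp only [hγ', if_neg h]
        refine lt_of_lt_of_le (hanti n (hpos n) ?_) (hleM n)
        have : 0 < δ / N := by positivity
        linarith
  exact ⟨hsum1, fun n m => by rw [hall n, hall m]⟩
end

section
/- Let f : ℝ^d → ℝ be differentiable with ‖∇f(w)‖ ≤ ε for all w. On a probability space, let w^0 ∈ ℝ^d be fixed and define iterates w^{k+1} = w^k − η·g_k for k = 0,…,K−1, where each stochastic gradient g_k satisfies E[g_k ∣ w^0,…,w^k] = ∇f(w^k) and E[‖g_k − ∇f(w^k)‖² ∣ w^0,…,w^k] ≤ σ². Then the local model drift satisfies E[‖w^k − w^0‖²] ≤ η²·k²·(ε² + σ²) for every k ≤ K. -/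
open MeasureTheory

open MeasureTheory in
private lemma condexp_clm_aux {α E F : Type*} {m m0 : MeasurableSpace α} {μ : Measure α}
    [NormedAddCommGroup E] [NormedSpace ℝ E] [CompleteSpace E]
    [NormedAddCommGroup F] [NormedSpace ℝ F] [CompleteSpace F]
    (hm : m ≤ m0) [SigmaFinite (μ.trim hm)]
    (L : E →L[ℝ] F) {X : α → E} (hX : Integrable X μ) :
    (μ[fun ω => L (X ω) | m]) =ᵐ[μ] fun ω => L ((μ[X | m]) ω) := by
  refine (ae_eq_condExp_of_forall_setIntegral_eq hm (L.integrable_comp hX) ?_ ?_ ?_).symm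
  · exact fun s _ _ => (L.integrable_comp integrable_condExp).integrableOn
  · intro s hs hμs
    rw [L.integral_comp_comm integrable_condExp.integrableOn,
      L.integral_comp_comm hX.integrableOn, setIntegral_condExp hm hX hs]
  · exact (L.continuous.comp_stronglyMeasurable
      stronglyMeasurable_condExp).aestronglyMeasurable

private lemma abs_coord_le_norm {d : ℕ} (x : EuclideanSpace ℝ (Fin d)) (j : Fin d) :
    |x j| ≤ ‖x‖ := by
  rw [EuclideanSpace.norm_eq, ← Real.sqrt_sq_eq_abs]
  apply Real.sqrt_le_sqrt
  have : x j ^ 2 ≤ ∑ i, x i ^ 2 :=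
    Finset.single_le_sum (f := fun i => x i ^ 2) (fun i _ => sq_nonneg _) (Finset.mem_univ j)
  simpa [sq_abs] using this


/-- Local model drift of `K` steps of mini-batch SGD.  If `f : ℝ^d → ℝ` is
differentiable with `‖∇f(w)‖ ≤ ε` everywhere, the iterates satisfy
`w^{k+1} = w^k − η g_k` starting from the deterministic `w^0 = w0`, and each stochastic
gradient `g_k` is unbiased given `w^0, …, w^k` with conditional variance at most `σ²`,
then `E‖w^k − w^0‖² ≤ η² k² (ε² + σ²)` for every `k ≤ K`. -/
theorem sgd_local_drift_bound (d : ℕ)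
    (f : EuclideanSpace ℝ (Fin d) → ℝ) (hf : Differentiable ℝ f)
    (ε σ η : ℝ) (hη : 0 < η)
    (hgrad : ∀ w, ‖gradient f w‖ ≤ ε)
    (Ω : Type*) [inst : MeasurableSpace Ω] (μ : Measure Ω) [IsProbabilityMeasure μ]
    (K : ℕ) (w0 : EuclideanSpace ℝ (Fin d))
    (w : ℕ → Ω → EuclideanSpace ℝ (Fin d))
    (g : ℕ → Ω → EuclideanSpace ℝ (Fin d))
    (hw0 : ∀ ω, w 0 ω = w0)
    (hrec : ∀ k < K, ∀ ω, w (k + 1) ω = w k ω - η • g k ω)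
    -- the σ-algebra generated by `w^0, …, w^k`
    (𝔪 : ℕ → MeasurableSpace Ω)
    (h𝔪 : ∀ k, 𝔪 k = ⨆ i : Fin (k + 1),
      MeasurableSpace.comap (fun ω => w i ω) inferInstance)
    (h𝔪le : ∀ k, 𝔪 k ≤ inst)
    (hint : ∀ k < K, Integrable (g k) μ)
    (hint2 : ∀ k < K,
      Integrable (fun ω => ‖g k ω - gradient f (w k ω)‖ ^ 2) μ)
    -- Assumption 1: conditional unbiasedness and bounded conditional variance
    (hunbiased : ∀ k < K,
      μ[g k | 𝔪 k] =ᵐ[μ] fun ω => gradient f (w k ω))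
    (hvar : ∀ k < K, ∀ᵐ ω ∂μ,
      (μ[fun ω' => ‖g k ω' - gradient f (w k ω')‖ ^ 2 | 𝔪 k]) ω ≤ σ ^ 2) :
    ∀ k ≤ K, ∫ ω, ‖w k ω - w0‖ ^ 2 ∂μ ≤ η ^ 2 * (k : ℝ) ^ 2 * (ε ^ 2 + σ ^ 2) := by
  classical
  have hε : 0 ≤ ε := le_trans (norm_nonneg _) (hgrad w0)
  -- Step 1: per-step second moment bound and integrability
  have key : ∀ i, i < K → Integrable (fun ω => ‖g i ω‖ ^ 2) μ ∧
      ∫ ω, ‖g i ω‖ ^ 2 ∂μ ≤ ε ^ 2 + σ ^ 2 := by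
    intro i hi
    have hm : 𝔪 i ≤ inst := h𝔪le i
    set a : Ω → EuclideanSpace ℝ (Fin d) := fun ω => gradient f (w i ω) with ha
    set ξ : Ω → EuclideanSpace ℝ (Fin d) := fun ω => g i ω - a ω with hξdef
    have hcond : μ[g i | 𝔪 i] =ᵐ[μ] a := hunbiased i hi
    have ha_meas' : AEStronglyMeasurable[𝔪 i] a μ :=
      ⟨μ[g i | 𝔪 i], stronglyMeasurable_condExp, hcond.symm⟩
    have ha_meas : AEStronglyMeasurable a μ :=
      ((stronglyMeasurable_condExp.mono hm).aestronglyMeasurable).congr hcond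
    have ha_bdd : ∀ ω, ‖a ω‖ ≤ ε := fun ω => hgrad _
    have ha_int : Integrable a μ :=
      (integrable_const ε).mono' ha_meas (Filter.Eventually.of_forall ha_bdd)
    have hg_int : Integrable (g i) μ := hint i hi
    have hξ_int : Integrable ξ μ := hg_int.sub ha_int
    have hξ_meas : AEStronglyMeasurable ξ μ := hξ_int.aestronglyMeasurable
    have hξsq_int : Integrable (fun ω => ‖ξ ω‖ ^ 2) μ := hint2 i hi
    -- conditional mean of ξ is 0
    have hξ_cond : μ[ξ | 𝔪 i] =ᵐ[μ] 0 := by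
      have h1 : μ[ξ | 𝔪 i] =ᵐ[μ] μ[g i | 𝔪 i] - μ[a | 𝔪 i] := condExp_sub hg_int ha_int _
      have h2 : μ[a | 𝔪 i] =ᵐ[μ] a := condExp_of_aestronglyMeasurable' hm ha_meas' ha_int
      filter_upwards [h1, h2, hcond] with ω e1 e2 e3
      simp only [e1, Pi.sub_apply, e2, e3, sub_self, Pi.zero_apply]
    -- coordinate products are integrable
    have haj_meas : ∀ j : Fin d, AEStronglyMeasurable (fun ω => a ω j) μ := fun j =>
      (EuclideanSpace.proj j).continuous.comp_aestronglyMeasurable ha_meas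
    have haj_bdd : ∀ j : Fin d, ∀ ω, ‖a ω j‖ ≤ ε := fun j ω =>
      le_trans (by simpa [Real.norm_eq_abs] using abs_coord_le_norm (a ω) j) (ha_bdd ω)
    have hξj_int : ∀ j : Fin d, Integrable (fun ω => ξ ω j) μ := fun j => by
      simpa using (EuclideanSpace.proj (𝕜 := ℝ) j).integrable_comp hξ_int
    have hcoord_int : ∀ j : Fin d, Integrable (fun ω => a ω j * ξ ω j) μ := fun j =>
      (hξj_int j).bdd_mul (haj_meas j) (Filter.Eventually.of_forall (haj_bdd j))
    -- inner product expansion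
    have hinner_eq : (fun ω => (inner ℝ (a ω) (ξ ω) : ℝ)) =
        fun ω => ∑ j : Fin d, a ω j * ξ ω j := by
      funext ω
      simp [PiLp.inner_apply, RCLike.inner_apply, mul_comm]
    have hinner_int : Integrable (fun ω => (inner ℝ (a ω) (ξ ω) : ℝ)) μ := by
      rw [hinner_eq]
      exact integrable_finset_sum _ fun j _ => hcoord_int j
    -- cross term is zero
    have cross : ∫ ω, (inner ℝ (a ω) (ξ ω) : ℝ) ∂μ = 0 := by
      rw [hinner_eq, integral_finset_sum _ fun j _ => hcoord_int j]
      refine Finset.sum_eq_zero fun j _ => ?_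
      have haj_meas' : AEStronglyMeasurable[𝔪 i] (fun ω => a ω j) μ := by
        refine ⟨fun ω => (μ[g i | 𝔪 i]) ω j,
          (EuclideanSpace.proj j).continuous.comp_stronglyMeasurable
            stronglyMeasurable_condExp, ?_⟩
        filter_upwards [hcond] with ω h
        simp [h]
      have hpull : μ[(fun ω => a ω j * ξ ω j) | 𝔪 i] =ᵐ[μ]
          (fun ω => a ω j) * μ[(fun ω => ξ ω j) | 𝔪 i] :=
        condExp_stronglyMeasurable_mul_of_bound₀ hm haj_meas' (hξj_int j) ε
          (Filter.Eventually.of_forall (haj_bdd j))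
      have hξj_cond : μ[(fun ω => ξ ω j) | 𝔪 i] =ᵐ[μ] 0 := by
        have h1 := condexp_clm_aux hm (EuclideanSpace.proj j) hξ_int
        have h2 : μ[(fun ω => ξ ω j) | 𝔪 i] =ᵐ[μ]
            fun ω => (EuclideanSpace.proj j) ((μ[ξ | 𝔪 i]) ω) := h1
        filter_upwards [h2, hξ_cond] with ω e1 e2
        simp [e1, e2]
      rw [← integral_condExp (μ := μ) (f := fun ω => a ω j * ξ ω j) hm]
      have hzero : μ[(fun ω => a ω j * ξ ω j) | 𝔪 i] =ᵐ[μ] 0 := by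
        filter_upwards [hpull, hξj_cond] with ω e1 e2
        simp [e1, e2]
      rw [integral_congr_ae hzero]
      simp
    -- expansion of ‖g i‖²
    have expand : ∀ ω, ‖g i ω‖ ^ 2 =
        ‖a ω‖ ^ 2 + 2 * (inner ℝ (a ω) (ξ ω) : ℝ) + ‖ξ ω‖ ^ 2 := by
      intro ω
      have hg : g i ω = a ω + ξ ω := by simp [hξdef]
      rw [hg, norm_add_sq_real]
    have hmeas2 : AEStronglyMeasurable (fun ω => ‖a ω‖ ^ 2) μ := by
      simpa [sq, Pi.mul_def] using ha_meas.norm.mul ha_meas.norm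
    have hasq_int : Integrable (fun ω => ‖a ω‖ ^ 2) μ := by
      refine (integrable_const (ε ^ 2)).mono' hmeas2
        (Filter.Eventually.of_forall fun ω => ?_)
      rw [Real.norm_eq_abs, abs_of_nonneg (sq_nonneg _)]
      exact pow_le_pow_left₀ (norm_nonneg _) (ha_bdd ω) 2
    have hgsq_int : Integrable (fun ω => ‖g i ω‖ ^ 2) μ := by
      have : (fun ω => ‖g i ω‖ ^ 2) = fun ω =>
          ‖a ω‖ ^ 2 + 2 * (inner ℝ (a ω) (ξ ω) : ℝ) + ‖ξ ω‖ ^ 2 := funext expand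
      rw [this]
      exact (hasq_int.add (hinner_int.const_mul 2)).add hξsq_int
    refine ⟨hgsq_int, ?_⟩
    have heq : ∫ ω, ‖g i ω‖ ^ 2 ∂μ = (∫ ω, ‖a ω‖ ^ 2 ∂μ) +
        2 * ∫ ω, (inner ℝ (a ω) (ξ ω) : ℝ) ∂μ + ∫ ω, ‖ξ ω‖ ^ 2 ∂μ := by
      calc ∫ ω, ‖g i ω‖ ^ 2 ∂μ
          = ∫ ω, (‖a ω‖ ^ 2 + 2 * (inner ℝ (a ω) (ξ ω) : ℝ) + ‖ξ ω‖ ^ 2) ∂μ :=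
            integral_congr_ae (Filter.Eventually.of_forall fun ω => expand ω)
        _ = (∫ ω, (‖a ω‖ ^ 2 + 2 * (inner ℝ (a ω) (ξ ω) : ℝ)) ∂μ) +
              ∫ ω, ‖ξ ω‖ ^ 2 ∂μ :=
            integral_add (hasq_int.add (hinner_int.const_mul 2)) hξsq_int
        _ = ((∫ ω, ‖a ω‖ ^ 2 ∂μ) + ∫ ω, 2 * (inner ℝ (a ω) (ξ ω) : ℝ) ∂μ) +
              ∫ ω, ‖ξ ω‖ ^ 2 ∂μ :=
            congrArg (· + ∫ ω, ‖ξ ω‖ ^ 2 ∂μ)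
              (integral_add hasq_int (hinner_int.const_mul 2))
        _ = _ := by
            have h2 : ∫ ω, 2 * (inner ℝ (a ω) (ξ ω) : ℝ) ∂μ =
                2 * ∫ ω, (inner ℝ (a ω) (ξ ω) : ℝ) ∂μ := integral_const_mul 2 _
            rw [h2]
    have hA : ∫ ω, ‖a ω‖ ^ 2 ∂μ ≤ ε ^ 2 := by
      calc ∫ ω, ‖a ω‖ ^ 2 ∂μ ≤ ∫ _ω, ε ^ 2 ∂μ :=
            integral_mono hasq_int (integrable_const _)
              (fun ω => pow_le_pow_left₀ (norm_nonneg _) (ha_bdd ω) 2)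
        _ = ε ^ 2 := by simp
    have hXi : ∫ ω, ‖ξ ω‖ ^ 2 ∂μ ≤ σ ^ 2 := by
      have h0 : ∫ ω, ‖ξ ω‖ ^ 2 ∂μ =
          ∫ ω, (μ[(fun ω' => ‖g i ω' - gradient f (w i ω')‖ ^ 2) | 𝔪 i]) ω ∂μ :=
        (integral_condExp (μ := μ)
          (f := fun ω' => ‖g i ω' - gradient f (w i ω')‖ ^ 2) hm).symm
      rw [h0]
      calc ∫ ω, (μ[(fun ω' => ‖g i ω' - gradient f (w i ω')‖ ^ 2) | 𝔪 i]) ω ∂μ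
          ≤ ∫ _ω, σ ^ 2 ∂μ :=
            integral_mono_ae integrable_condExp (integrable_const _) (hvar i hi)
        _ = σ ^ 2 := by simp
    rw [heq, cross]
    linarith
  -- Step 2: closed form for the iterates
  have hwk : ∀ k, k ≤ K → ∀ ω, w k ω = w0 - η • ∑ j ∈ Finset.range k, g j ω := by
    intro k
    induction k with
    | zero => intro _ ω; simp [hw0]
    | succ n ih =>
      intro hk ω
      have hnK : n < K := lt_of_lt_of_le (Nat.lt_succ_self n) hk
      rw [hrec n hnK ω, ih (le_of_lt hnK) ω, Finset.sum_range_succ, smul_add, sub_sub]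
  -- Step 3: conclusion
  intro k hk
  have h1 : ∀ ω, ‖w k ω - w0‖ ^ 2 = η ^ 2 * ‖∑ j ∈ Finset.range k, g j ω‖ ^ 2 := by
    intro ω
    rw [hwk k hk ω, sub_sub_cancel_left, norm_neg, norm_smul, Real.norm_eq_abs,
      abs_of_pos hη, mul_pow]
  have h2 : ∀ ω, ‖∑ j ∈ Finset.range k, g j ω‖ ^ 2 ≤
      (k : ℝ) * ∑ j ∈ Finset.range k, ‖g j ω‖ ^ 2 := by
    intro ω
    calc ‖∑ j ∈ Finset.range k, g j ω‖ ^ 2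
        ≤ (∑ j ∈ Finset.range k, ‖g j ω‖) ^ 2 :=
          pow_le_pow_left₀ (norm_nonneg _) (norm_sum_le _ _) 2
      _ ≤ (k : ℝ) * ∑ j ∈ Finset.range k, ‖g j ω‖ ^ 2 := by
          simpa using sq_sum_le_card_mul_sum_sq
            (s := Finset.range k) (f := fun j => ‖g j ω‖)
  have hsum_int : Integrable (fun ω => ∑ j ∈ Finset.range k, ‖g j ω‖ ^ 2) μ :=
    integrable_finset_sum _ fun j hj =>
      (key j (lt_of_lt_of_le (Finset.mem_range.mp hj) hk)).1
  have hstep : ∫ ω, ‖w k ω - w0‖ ^ 2 ∂μ ≤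
      η ^ 2 * ∫ ω, (k : ℝ) * ∑ j ∈ Finset.range k, ‖g j ω‖ ^ 2 ∂μ := by
    rw [show (fun ω => ‖w k ω - w0‖ ^ 2) = fun ω =>
      η ^ 2 * ‖∑ j ∈ Finset.range k, g j ω‖ ^ 2 from funext h1, integral_const_mul]
    refine mul_le_mul_of_nonneg_left ?_ (sq_nonneg η)
    refine integral_mono_of_nonneg (Filter.Eventually.of_forall fun ω => sq_nonneg _)
      (hsum_int.const_mul _) (Filter.Eventually.of_forall h2)
  have hfin : ∫ ω, (k : ℝ) * ∑ j ∈ Finset.range k, ‖g j ω‖ ^ 2 ∂μ ≤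
      (k : ℝ) * ((k : ℝ) * (ε ^ 2 + σ ^ 2)) := by
    rw [integral_const_mul, integral_finset_sum _ fun j hj =>
      (key j (lt_of_lt_of_le (Finset.mem_range.mp hj) hk)).1]
    refine mul_le_mul_of_nonneg_left ?_ (Nat.cast_nonneg k)
    calc ∑ j ∈ Finset.range k, ∫ ω, ‖g j ω‖ ^ 2 ∂μ
        ≤ ∑ _j ∈ Finset.range k, (ε ^ 2 + σ ^ 2) :=
          Finset.sum_le_sum fun j hj =>
            (key j (lt_of_lt_of_le (Finset.mem_range.mp hj) hk)).2
      _ = (k : ℝ) * (ε ^ 2 + σ ^ 2) := by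
          simp [Finset.sum_const]; ring
  calc ∫ ω, ‖w k ω - w0‖ ^ 2 ∂μ
      ≤ η ^ 2 * ∫ ω, (k : ℝ) * ∑ j ∈ Finset.range k, ‖g j ω‖ ^ 2 ∂μ := hstep
    _ ≤ η ^ 2 * ((k : ℝ) * ((k : ℝ) * (ε ^ 2 + σ ^ 2))) :=
        mul_le_mul_of_nonneg_left hfin (sq_nonneg η)
    _ = η ^ 2 * (k : ℝ) ^ 2 * (ε ^ 2 + σ ^ 2) := by ring
end
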